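/- The second-order partial derivatives of the rank-one PCP loglikelihood satisfy: for every p and i, j ∈ {1,…,N_p}, ∂²ℓ(X|θ)/∂a_p(i)∂a_p(j) = −[i = j] · x_p(i)/a_p(i)²; and for p ≠ q, i ∈ {1,…,N_p}, j ∈ {1,…,N_q}, ∂²ℓ(X|θ)/∂a_p(i)∂a_q(j) = −∏_{s≠p,q} λ_s = −λ/(λ_p λ_q), where x_p(i) = Σ_{i' : i'_p = i} x_{i'}, λ_s = Σ_j a_s(j), λ = λ_1⋯λ_P, and [i = j] is 1 if i = j and 0 otherwise. -/

import Mathlib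

open Finset

noncomputable section

variable {P : ℕ} {N : Fin P → ℕ}

/-- Rank-one parameter tensor entry `m_i = ∏_p a_p(i_p)`. -/
def mOne (a : (p : Fin P) → Fin (N p) → ℝ) (i : (p : Fin P) → Fin (N p)) : ℝ :=
  ∏ p, a p (i p)

/-- Rank-one PCP loglikelihood `ℓ(X|θ) = Σ_i [ x_i log m_i − m_i − log(x_i!) ]`. -/
def llik1 (a : (p : Fin P) → Fin (N p) → ℝ) (X : ((p : Fin P) → Fin (N p)) → ℕ) : ℝ :=
  ∑ i : (p : Fin P) → Fin (N p),
    ((X i : ℝ) * Real.log (mOne a i) - mOne a i - Real.log (Nat.factorial (X i) : ℝ))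

/-- Mode-`p` marginal sum `x_p(j) = Σ_{i : i_p = j} x_i` (as a real number). -/
def xmarg (X : ((p : Fin P) → Fin (N p)) → ℕ) (p : Fin P) (j : Fin (N p)) : ℝ :=
  ∑ i ∈ Finset.univ.filter (fun i : (q : Fin P) → Fin (N q) => i p = j), (X i : ℝ)

/-- Factor sum `λ_p = Σ_j a_p(j)`. -/
def lam1 (a : (p : Fin P) → Fin (N p) → ℝ) (p : Fin P) : ℝ :=
  ∑ j, a p j

/-- Partial derivative of a function of the factor vectors in the single entry
`a_p(j)`: the derivative of the real function obtained by varying that entry with all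
other entries fixed, evaluated at the current value. -/
def pd1 (f : ((q : Fin P) → Fin (N q) → ℝ) → ℝ) (p : Fin P) (j : Fin (N p))
    (a : (q : Fin P) → Fin (N q) → ℝ) : ℝ :=
  deriv (fun t => f (Function.update a p (Function.update (a p) j t))) (a p j)

lemma mOne_update (a : (p : Fin P) → Fin (N p) → ℝ) (q : Fin P) (j : Fin (N q)) (t : ℝ)
    (i : (p : Fin P) → Fin (N p)) :
    mOne (Function.update a q (Function.update (a q) j t)) i =
      (if i q = j then t else a q (i q)) * ∏ s ∈ univ.erase q, a s (i s) := by
  unfold mOne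
  rw [← Finset.mul_prod_erase univ _ (mem_univ q)]
  congr 1
  · rw [Function.update_self, Function.update_apply]
  · exact Finset.prod_congr rfl fun s hs => by
      rw [Function.update_of_ne (Finset.ne_of_mem_erase hs)]

lemma hasDerivAt_llik1_update (a : (p : Fin P) → Fin (N p) → ℝ) (ha : ∀ p k, 0 < a p k)
    (X : ((p : Fin P) → Fin (N p)) → ℕ) (q : Fin P) (j : Fin (N q)) (t₀ : ℝ) (ht₀ : 0 < t₀) :
    HasDerivAt (fun t => llik1 (Function.update a q (Function.update (a q) j t)) X)
      (xmarg X q j / t₀ - ∑ i ∈ univ.filter (fun i : (p : Fin P) → Fin (N p) => i q = j),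
        ∏ s ∈ univ.erase q, a s (i s)) t₀ := by
  have hC : ∀ i : (p : Fin P) → Fin (N p), 0 < ∏ s ∈ univ.erase q, a s (i s) := fun i =>
    Finset.prod_pos fun s _ => ha s (i s)
  have key : ∀ i : (p : Fin P) → Fin (N p), HasDerivAt
      (fun t => (X i : ℝ) * Real.log (mOne (Function.update a q (Function.update (a q) j t)) i)
        - mOne (Function.update a q (Function.update (a q) j t)) i
        - Real.log (Nat.factorial (X i) : ℝ))
      (if i q = j then (X i : ℝ) / t₀ - ∏ s ∈ univ.erase q, a s (i s) else 0) t₀ := by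
    intro i
    simp only [mOne_update]
    by_cases h : i q = j
    · simp only [h, if_pos rfl, if_true]
      set C := ∏ s ∈ univ.erase q, a s (i s) with hCdef
      have h1 : HasDerivAt (fun t : ℝ => t * C) C t₀ := by
        simpa using (hasDerivAt_id t₀).mul_const C
      have hne : t₀ * C ≠ 0 := ne_of_gt (mul_pos ht₀ (hC i))
      have h2 : HasDerivAt (fun t : ℝ => Real.log (t * C)) (C / (t₀ * C)) t₀ := h1.log hne
      have h3 := ((h2.const_mul ((X i : ℝ))).sub h1).sub_const (Real.log (Nat.factorial (X i) : ℝ))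
      refine h3.congr_deriv ?_
      rw [mul_div_assoc', mul_div_mul_right _ _ (ne_of_gt (hC i))]
    · simp only [h, if_false]
      exact (hasDerivAt_const t₀ _)
  have hsum := HasDerivAt.fun_sum (fun i (_ : i ∈ (univ : Finset ((p : Fin P) → Fin (N p)))) => key i)
  have : (∑ i : (p : Fin P) → Fin (N p),
      if i q = j then (X i : ℝ) / t₀ - ∏ s ∈ univ.erase q, a s (i s) else 0)
      = xmarg X q j / t₀ - ∑ i ∈ univ.filter (fun i : (p : Fin P) → Fin (N p) => i q = j),
          ∏ s ∈ univ.erase q, a s (i s) := by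
    rw [← Finset.sum_filter, Finset.sum_sub_distrib, ← Finset.sum_div, xmarg]
  rw [← this]
  exact hsum

def inner1 (X : ((p : Fin P) → Fin (N p)) → ℕ) (q : Fin P) (j : Fin (N q))
    (a : (p : Fin P) → Fin (N p) → ℝ) : ℝ :=
  xmarg X q j / a q j - ∑ i ∈ univ.filter (fun i : (p : Fin P) → Fin (N p) => i q = j),
    ∏ s ∈ univ.erase q, a s (i s)

lemma pd1_llik1 (a : (p : Fin P) → Fin (N p) → ℝ) (ha : ∀ p k, 0 < a p k)
    (X : ((p : Fin P) → Fin (N p)) → ℕ) (q : Fin P) (j : Fin (N q)) :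
    pd1 (fun a'' => llik1 a'' X) q j a = inner1 X q j a :=
  (hasDerivAt_llik1_update a ha X q j (a q j) (ha q j)).deriv

example : True := trivial

lemma key_sum (a : (p : Fin P) → Fin (N p) → ℝ) (p q : Fin P) (hpq : p ≠ q)
    (i : Fin (N p)) (j : Fin (N q)) :
    ∑ i' ∈ univ.filter (fun i' : (s : Fin P) → Fin (N s) => i' q = j ∧ i' p = i),
      ∏ s ∈ (univ.erase q).erase p, a s (i' s)
    = ∏ s ∈ (univ.erase q).erase p, lam1 a s := by
  classical
  set b : (s : Fin P) → Fin (N s) → ℝ :=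
    Function.update (Function.update a p (fun k => if k = i then 1 else 0)) q
      (fun k => if k = j then 1 else 0) with hb
  have hbq : b q = fun k => if k = j then 1 else 0 := Function.update_self _ _ _
  have hbp : b p = fun k => if k = i then 1 else 0 := by
    rw [hb, Function.update_of_ne hpq, Function.update_self]
  have hbs : ∀ s, s ≠ p → s ≠ q → b s = a s := fun s hsp hsq => by
    rw [hb, Function.update_of_ne hsq, Function.update_of_ne hsp]
  have hmain := Finset.prod_univ_sum (fun s : Fin P => (univ : Finset (Fin (N s))))
    (fun s k => b s k)
  rw [Fintype.piFinset_univ] at hmain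
  have hq : q ∈ (univ : Finset (Fin P)) := mem_univ q
  have hp : p ∈ univ.erase q := mem_erase.2 ⟨hpq, mem_univ p⟩
  -- LHS of hmain
  have hL : (∏ s : Fin P, ∑ k, b s k) = ∏ s ∈ (univ.erase q).erase p, lam1 a s := by
    rw [← Finset.mul_prod_erase univ _ hq, ← Finset.mul_prod_erase _ _ hp]
    have h1 : (∑ k, b q k) = 1 := by simp [hbq]
    have h2 : (∑ k, b p k) = 1 := by simp [hbp]
    rw [h1, h2, one_mul, one_mul]
    refine Finset.prod_congr rfl fun s hs => ?_
    have hsne := Finset.mem_erase.1 hs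
    have hsne2 := Finset.mem_erase.1 hsne.2
    rw [hbs s hsne.1 hsne2.1, lam1]
  -- RHS of hmain
  have hR : (∑ i' : (s : Fin P) → Fin (N s), ∏ s, b s (i' s))
      = ∑ i' ∈ univ.filter (fun i' : (s : Fin P) → Fin (N s) => i' q = j ∧ i' p = i),
          ∏ s ∈ (univ.erase q).erase p, a s (i' s) := by
    rw [Finset.sum_filter]
    refine Finset.sum_congr rfl fun i' _ => ?_
    rw [← Finset.mul_prod_erase univ _ hq, ← Finset.mul_prod_erase _ _ hp]
    have h3 : (∏ s ∈ (univ.erase q).erase p, b s (i' s))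
        = ∏ s ∈ (univ.erase q).erase p, a s (i' s) := by
      refine Finset.prod_congr rfl fun s hs => ?_
      have hsne := Finset.mem_erase.1 hs
      have hsne2 := Finset.mem_erase.1 hsne.2
      rw [hbs s hsne.1 hsne2.1]
    rw [h3, hbq, hbp]
    by_cases h4 : i' q = j <;> by_cases h5 : i' p = i <;> simp [h4, h5]
  rw [hL, hR] at hmain
  exact hmain.symm

lemma update_pos (a : (p : Fin P) → Fin (N p) → ℝ) (ha : ∀ p k, 0 < a p k)
    (p : Fin P) (i : Fin (N p)) {t : ℝ} (ht : 0 < t) :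
    ∀ s k, 0 < Function.update a p (Function.update (a p) i t) s k := by
  intro s k
  rcases eq_or_ne s p with rfl | h
  · rw [Function.update_self, Function.update_apply]
    split_ifs
    exacts [ht, ha s k]
  · rw [Function.update_of_ne h]; exact ha s k

/-- **Hessian of the rank-one PCP loglikelihood.** For every mode `p` and indices `i, j`,
`∂²ℓ/∂a_p(i)∂a_p(j) = −[i = j] · x_p(i)/a_p(i)²`; and for modes `p ≠ q` and indices
`i, j`, `∂²ℓ/∂a_p(i)∂a_q(j) = −∏_{s≠p,q} λ_s`, which equals `−λ/(λ_p λ_q)` with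
`λ = λ_1 ⋯ λ_P`. -/
theorem stmt_13 (P : ℕ) (hP : 2 ≤ P) (N : Fin P → ℕ) (hN : ∀ p, 1 ≤ N p)
    (a : (p : Fin P) → Fin (N p) → ℝ) (ha : ∀ p j, 0 < a p j)
    (X : ((p : Fin P) → Fin (N p)) → ℕ) :
    (∀ (p : Fin P) (i j : Fin (N p)),
      pd1 (fun a' => pd1 (fun a'' => llik1 a'' X) p j a') p i a =
        -(if i = j then xmarg X p i / (a p i) ^ 2 else 0)) ∧
    (∀ (p q : Fin P), p ≠ q → ∀ (i : Fin (N p)) (j : Fin (N q)),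
      pd1 (fun a' => pd1 (fun a'' => llik1 a'' X) q j a') p i a =
          -∏ s ∈ (Finset.univ.erase p).erase q, lam1 a s ∧
        (∏ s ∈ (Finset.univ.erase p).erase q, lam1 a s) =
          (∏ s, lam1 a s) / (lam1 a p * lam1 a q)) := by
  classical
  have hev : ∀ (p : Fin P) (i : Fin (N p)) (q : Fin P) (j : Fin (N q)),
      (fun t => pd1 (fun a'' => llik1 a'' X) q j
          (Function.update a p (Function.update (a p) i t)))
        =ᶠ[nhds (a p i)]
      (fun t => inner1 X q j (Function.update a p (Function.update (a p) i t))) := by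
    intro p i q j
    filter_upwards [Ioi_mem_nhds (ha p i)] with t ht
    exact pd1_llik1 _ (update_pos a ha p i ht) X q j
  constructor
  · -- diagonal case
    intro p i j
    have hrw : pd1 (fun a' => pd1 (fun a'' => llik1 a'' X) p j a') p i a
        = deriv (fun t => pd1 (fun a'' => llik1 a'' X) p j
            (Function.update a p (Function.update (a p) i t))) (a p i) := rfl
    rw [hrw, (hev p i p j).deriv_eq]
    set S₀ : ℝ := ∑ i' ∈ univ.filter (fun i' : (s : Fin P) → Fin (N s) => i' p = j),
      ∏ s ∈ univ.erase p, a s (i' s) with hS₀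
    have hfun : ∀ t, inner1 X p j (Function.update a p (Function.update (a p) i t))
        = xmarg X p j / (if j = i then t else a p j) - S₀ := by
      intro t
      rw [inner1]
      congr 1
      · rw [Function.update_self, Function.update_apply]
      · refine Finset.sum_congr rfl fun i' _ => Finset.prod_congr rfl fun s hs => ?_
        rw [Function.update_of_ne (Finset.ne_of_mem_erase hs)]
    simp only [hfun]
    by_cases hij : i = j
    · subst hij
      simp only [eq_self_iff_true, if_true]
      have h1 : HasDerivAt (fun t : ℝ => xmarg X p i / t - S₀)
          (-(xmarg X p i / (a p i) ^ 2)) (a p i) := by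
        have h2 : HasDerivAt (fun t : ℝ => xmarg X p i / t)
            (xmarg X p i * (-((a p i) ^ 2)⁻¹)) (a p i) := by
          simp only [div_eq_mul_inv]
          exact (hasDerivAt_inv (ne_of_gt (ha p i))).const_mul _
        have := h2.sub_const S₀
        refine this.congr_deriv ?_
        ring
      rw [h1.deriv]
    · simp only [if_neg hij, if_neg (Ne.symm hij)]
      simp
  · -- off-diagonal case
    intro p q hpq i j
    have hlam : ∀ s, 0 < lam1 a s := by
      intro s
      have : Nonempty (Fin (N s)) := Fin.pos_iff_nonempty.1 (hN s)
      exact Finset.sum_pos (fun k _ => ha s k) univ_nonempty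
    have hpq2 : (∏ s ∈ (Finset.univ.erase p).erase q, lam1 a s) =
        (∏ s, lam1 a s) / (lam1 a p * lam1 a q) := by
      have hq : q ∈ univ.erase p := mem_erase.2 ⟨Ne.symm hpq, mem_univ q⟩
      rw [← Finset.mul_prod_erase univ _ (mem_univ p), ← Finset.mul_prod_erase _ _ hq]
      field_simp [ne_of_gt (hlam p), ne_of_gt (hlam q)]
    refine ⟨?_, hpq2⟩
    have hrw : pd1 (fun a' => pd1 (fun a'' => llik1 a'' X) q j a') p i a
        = deriv (fun t => pd1 (fun a'' => llik1 a'' X) q j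
            (Function.update a p (Function.update (a p) i t))) (a p i) := rfl
    rw [hrw, (hev p i q j).deriv_eq]
    have hp : p ∈ univ.erase q := mem_erase.2 ⟨hpq, mem_univ p⟩
    set D : ((s : Fin P) → Fin (N s)) → ℝ :=
      fun i' => ∏ s ∈ (univ.erase q).erase p, a s (i' s) with hD
    have hfun : ∀ t, inner1 X q j (Function.update a p (Function.update (a p) i t))
        = xmarg X q j / a q j -
          ∑ i' ∈ univ.filter (fun i' : (s : Fin P) → Fin (N s) => i' q = j),
            (if i' p = i then t else a p (i' p)) * D i' := by
      intro t
      rw [inner1]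
      congr 1
      · rw [Function.update_of_ne (Ne.symm hpq)]
      · refine Finset.sum_congr rfl fun i' _ => ?_
        rw [← Finset.mul_prod_erase _ _ hp]
        congr 1
        · rw [Function.update_self, Function.update_apply]
        · refine Finset.prod_congr rfl fun s hs => ?_
          have hsne := Finset.mem_erase.1 hs
          rw [Function.update_of_ne hsne.1]
    simp only [hfun]
    have hder : HasDerivAt (fun t => xmarg X q j / a q j -
        ∑ i' ∈ univ.filter (fun i' : (s : Fin P) → Fin (N s) => i' q = j),
          (if i' p = i then t else a p (i' p)) * D i')
        (-(∑ i' ∈ univ.filter (fun i' : (s : Fin P) → Fin (N s) => i' q = j),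
            if i' p = i then D i' else 0)) (a p i) := by
      have hsum : HasDerivAt (fun t => ∑ i' ∈ univ.filter
            (fun i' : (s : Fin P) → Fin (N s) => i' q = j),
            (if i' p = i then t else a p (i' p)) * D i')
          (∑ i' ∈ univ.filter (fun i' : (s : Fin P) → Fin (N s) => i' q = j),
            if i' p = i then D i' else 0) (a p i) := by
        refine HasDerivAt.fun_sum fun i' _ => ?_
        by_cases h : i' p = i
        · simp only [h, if_pos rfl, if_true]
          simpa using (hasDerivAt_id (a p i)).mul_const (D i')
        · simp only [h, if_false]
          exact hasDerivAt_const _ _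
      simpa using (hasDerivAt_const (a p i) (xmarg X q j / a q j)).fun_sub hsum
    rw [hder.deriv]
    congr 1
    rw [← Finset.sum_filter, Finset.filter_filter]
    rw [key_sum a p q hpq i j, Finset.erase_right_comm]
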